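/- If G is a connected graph of size m (number of edges), then pc(G) = m if and only if G is the star K_{1,m}. -/

import Mathlib

open SimpleGraph

/-- An edge-coloring `c` with `k` colors is a *proper connection coloring* of `G`
if every pair of vertices is joined by a path whose consecutive edges have distinct colors. -/
def ProperConnColoring {V : Type*} (G : SimpleGraph V) {k : ℕ} (c : Sym2 V → Fin k) : Prop :=
  ∀ u v : V, ∃ p : G.Walk u v, p.IsPath ∧ (p.edges.map c).Chain' (· ≠ ·)

/-- The proper connection number of `G`. -/
noncomputable def pc {V : Type*} (G : SimpleGraph V) : ℕ :=
  sInf {k | ∃ c : Sym2 V → Fin k, ProperConnColoring G c}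

lemma pcc_of_iso {V W : Type*} {G : SimpleGraph V} {H : SimpleGraph W} (e : G ≃g H)
    {k : ℕ} {c : Sym2 W → Fin k} (hc : ProperConnColoring H c) :
    ProperConnColoring G (c ∘ Sym2.map e) := by
  intro u v
  obtain ⟨p, hp, hch⟩ := hc (e u) (e v)
  refine ⟨(p.map e.symm.toHom).copy (e.symm_apply_apply u) (e.symm_apply_apply v), ?_, ?_⟩
  · rw [Walk.isPath_copy]
    exact Walk.map_isPath_of_injective e.symm.injective hp
  · rw [Walk.edges_copy, Walk.edges_map, List.map_map]
    have : (c ∘ Sym2.map ⇑e) ∘ Sym2.map ⇑e.symm.toHom = c := by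
      funext s
      simp only [Function.comp_apply]
      congr 1
      rw [Sym2.map_map]
      have h2 : (⇑e ∘ ⇑e.symm.toHom) = id := by funext x; simp
      rw [h2, Sym2.map_id, id]
    rw [this]
    exact hch

lemma pc_iso {V W : Type*} {G : SimpleGraph V} {H : SimpleGraph W} (e : G ≃g H) :
    pc G = pc H := by
  unfold pc
  congr 1
  ext k
  exact ⟨fun ⟨c, hc⟩ => ⟨c ∘ Sym2.map e.symm, pcc_of_iso e.symm hc⟩,
    fun ⟨c, hc⟩ => ⟨c ∘ Sym2.map e, pcc_of_iso e hc⟩⟩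

section Star
variable {m : ℕ}

abbrev starG (m : ℕ) := completeBipartiteGraph (Fin 1) (Fin m)

lemma star_adj_right {i : Fin m} {x : Fin 1 ⊕ Fin m} (h : (starG m).Adj (Sum.inr i) x) :
    x = Sum.inl 0 := by
  rcases h with ⟨h1, _⟩ | ⟨_, h2⟩
  · simp at h1
  · cases x with
    | inl a => congr; exact Subsingleton.elim a 0
    | inr b => simp at h2

lemma star_adj_left {x : Fin 1 ⊕ Fin m} {y : Fin 1 ⊕ Fin m} (h : (starG m).Adj x y)
    (hx : x.isLeft) : ∃ b, y = Sum.inr b := by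
  rcases h with ⟨_, h2⟩ | ⟨h1, _⟩
  · cases y with
    | inl a => simp at h2
    | inr b => exact ⟨b, rfl⟩
  · rw [Sum.isLeft_iff] at hx; obtain ⟨a, rfl⟩ := hx; simp at h1

lemma star_path_edges {i j : Fin m} (hij : i ≠ j) (p : (starG m).Walk (Sum.inr i) (Sum.inr j))
    (hp : p.IsPath) :
    p.edges = [s(Sum.inr i, Sum.inl 0), s(Sum.inl 0, Sum.inr j)] := by
  cases p with
  | nil => exact (hij rfl).elim
  | cons h q =>
    rename_i x
    have hx : x = Sum.inl 0 := star_adj_right h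
    subst hx
    cases q with
    | cons h' r =>
      rename_i y
      obtain ⟨b, hb⟩ := star_adj_left h' (by simp)
      subst hb
      cases r with
      | nil => rfl
      | cons h'' r' =>
        rename_i z
        have hz : z = Sum.inl 0 := star_adj_right h''
        subst hz
        exfalso
        have := hp.support_nodup
        simp [Walk.support_cons] at this

lemma star_pc (hm : 1 ≤ m) : pc (starG m) = m := by
  have : NeZero m := ⟨by omega⟩
  have hmem : m ∈ {k | ∃ c : Sym2 (Fin 1 ⊕ Fin m) → Fin k, ProperConnColoring (starG m) c} := by
    refine ⟨Sym2.lift ⟨fun a b => Sum.elim (fun _ => (0 : Fin m)) id a + Sum.elim (fun _ => (0 : Fin m)) id b,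
      fun a b => add_comm _ _⟩, ?_⟩
    intro u v
    by_cases huv : u = v
    · subst huv; exact ⟨Walk.nil, by simp, by simp [List.Chain']⟩
    cases u with
    | inl a =>
      cases v with
      | inl b => exact absurd (by rw [Subsingleton.elim a b]) huv
      | inr j =>
        exact ⟨Walk.cons (by simp [starG]) Walk.nil, by simp, by simp [List.Chain']⟩
    | inr i =>
      cases v with
      | inl b =>
        exact ⟨Walk.cons (by simp [starG]) Walk.nil, by simp, by simp [List.Chain']⟩
      | inr j =>
        have hij : i ≠ j := fun h => huv (by rw [h])
        refine ⟨Walk.cons (by simp [starG])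
          (Walk.cons (show (starG m).Adj (Sum.inl 0) (Sum.inr j) by simp [starG]) Walk.nil),
          ?_, ?_⟩
        · simp [Walk.cons_isPath_iff]
          exact hij
        · simp [hij, List.Chain']
  apply le_antisymm (Nat.sInf_le hmem)
  refine le_csInf ⟨m, hmem⟩ ?_
  rintro k ⟨c, hc⟩
  have hinj : Function.Injective (fun i : Fin m => c s(Sum.inl 0, Sum.inr i)) := by
    intro i j hcij
    by_contra hij
    obtain ⟨p, hp, hch⟩ := hc (Sum.inr i) (Sum.inr j)
    rw [star_path_edges hij p hp] at hch
    simp [List.Chain'] at hch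
    rw [Sym2.eq_swap] at hch
    exact hch (by simpa using hcij)
  simpa using Fintype.card_le_of_injective _ hinj
end Star

lemma chain'_and {α : Type*} {R S : α → α → Prop} :
    ∀ {l : List α}, l.Chain' R → l.Chain' S → l.Chain' (fun a b => R a b ∧ S a b) := by
  intro l
  induction l with
  | nil => intro _ _; simp [List.Chain']
  | cons a l ih =>
    intro hR hS
    simp only [List.Chain'] at hR hS ⊢
    rw [List.isChain_cons] at hR hS ⊢
    exact ⟨fun b hb => ⟨hR.1 b hb, hS.1 b hb⟩, ih hR.2 hS.2⟩

/-- consecutive edges of a walk share a vertex -/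
lemma walk_edges_chain {V : Type*} {G : SimpleGraph V} :
    ∀ {u v : V} (p : G.Walk u v), p.edges.Chain' (fun e f => ∃ x, x ∈ e ∧ x ∈ f) := by
  intro u v p
  induction p with
  | nil => simp [List.Chain']
  | cons h q ih =>
    rename_i x y z
    rw [Walk.edges_cons]
    simp only [List.Chain']
    rw [List.isChain_cons]
    refine ⟨?_, ih⟩
    intro e he
    cases q with
    | nil => simp at he
    | cons h' r =>
      simp only [Walk.edges_cons, List.head?_cons, Option.mem_def, Option.some.injEq] at he
      exact ⟨y, by simp [← he]⟩

lemma pc_le_of_disjoint_edges {V : Type*} [Fintype V] [DecidableEq V] (G : SimpleGraph V)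
    [DecidableRel G.Adj] (hG : G.Connected) {e1 e2 : Sym2 V}
    (h1 : e1 ∈ G.edgeFinset) (h2 : e2 ∈ G.edgeFinset)
    (hdisj : ∀ x, ¬(x ∈ e1 ∧ x ∈ e2)) :
    pc G ≤ G.edgeFinset.card - 1 := by
  have hne : e1 ≠ e2 := by
    rintro rfl
    induction e1 using Sym2.ind with
    | _ x y => exact hdisj x ⟨by simp, by simp⟩
  have hcard2 : 2 ≤ G.edgeFinset.card := Finset.one_lt_card.mpr ⟨e1, h1, e2, h2, hne⟩
  set n := G.edgeFinset.card - 1 with hn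
  have h1T : e1 ∈ G.edgeFinset.erase e2 := Finset.mem_erase.mpr ⟨hne, h1⟩
  have hcardT : Fintype.card (G.edgeFinset.erase e2 : Finset (Sym2 V)) = n := by
    rw [Fintype.card_coe, Finset.card_erase_of_mem h2]
  let f : (G.edgeFinset.erase e2 : Finset (Sym2 V)) ≃ Fin n := Fintype.equivFinOfCardEq hcardT
  let c : Sym2 V → Fin n := fun s => if h : s ∈ G.edgeFinset.erase e2 then f ⟨s, h⟩ else f ⟨e1, h1T⟩
  -- key: adjacent distinct edges get different colors
  have key : ∀ a ∈ G.edgeFinset, ∀ b ∈ G.edgeFinset, a ≠ b → (∃ x, x ∈ a ∧ x ∈ b) → c a ≠ c b := by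
    intro a ha b hb hab ⟨x, hxa, hxb⟩
    by_cases haT : a ∈ G.edgeFinset.erase e2 <;> by_cases hbT : b ∈ G.edgeFinset.erase e2
    · simp only [c, dif_pos haT, dif_pos hbT]
      intro h
      exact hab (Subtype.ext_iff.mp (f.injective h))
    · have hb2 : b = e2 := by
        by_contra h
        exact hbT (Finset.mem_erase.mpr ⟨h, hb⟩)
      subst hb2
      simp only [c, dif_pos haT, dif_neg hbT]
      intro h
      have : a = e1 := Subtype.ext_iff.mp (f.injective h)
      subst this
      exact hdisj x ⟨hxa, hxb⟩
    · have ha2 : a = e2 := by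
        by_contra h
        exact haT (Finset.mem_erase.mpr ⟨h, ha⟩)
      subst ha2
      simp only [c, dif_neg haT, dif_pos hbT]
      intro h
      have : e1 = b := Subtype.ext_iff.mp (f.injective h)
      exact hdisj x ⟨this ▸ hxb, hxa⟩
    · exfalso
      have ha2 : a = e2 := by
        by_contra h
        exact haT (Finset.mem_erase.mpr ⟨h, ha⟩)
      have hb2 : b = e2 := by
        by_contra h
        exact hbT (Finset.mem_erase.mpr ⟨h, hb⟩)
      exact hab (ha2.trans hb2.symm)
  apply Nat.sInf_le
  refine ⟨c, fun u v => ?_⟩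
  obtain ⟨w⟩ := hG.preconnected u v
  refine ⟨(w.toPath : G.Walk u v), (w.toPath).2, ?_⟩
  set p := (w.toPath : G.Walk u v) with hp
  have hpath : p.IsPath := (w.toPath).2
  simp only [List.Chain']
  rw [List.isChain_map]
  have hnodup : p.edges.Chain' (· ≠ ·) := hpath.edges_nodup.isChain
  have hshare := walk_edges_chain p
  rw [List.isChain_iff_getElem]
  intro i hi
  have hab := List.isChain_iff_getElem.mp hnodup i hi
  have hx := List.isChain_iff_getElem.mp hshare i hi
  have hlen : i < p.edges.length := by omega
  have hlen2 : i + 1 < p.edges.length := by omega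
  have ha := SimpleGraph.mem_edgeFinset.mpr (p.edges_subset_edgeSet (List.getElem_mem hlen))
  have hb := SimpleGraph.mem_edgeFinset.mpr (p.edges_subset_edgeSet (List.getElem_mem hlen2))
  exact key _ ha _ hb hab hx

lemma pc_le_one_of_complete {V : Type*} (G : SimpleGraph V)
    (h : ∀ u v : V, u ≠ v → G.Adj u v) : pc G ≤ 1 := by
  apply Nat.sInf_le
  refine ⟨fun _ => 0, fun u v => ?_⟩
  by_cases huv : u = v
  · subst huv; exact ⟨Walk.nil, by simp, by simp [List.Chain']⟩
  · exact ⟨Walk.cons (h u v huv) Walk.nil, by simp [huv], by simp [List.Chain']⟩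

lemma star_iso {V : Type*} [Fintype V] [DecidableEq V] (G : SimpleGraph V)
    [DecidableRel G.Adj] (hG : G.Connected) (v : V)
    (hv : ∀ e ∈ G.edgeSet, v ∈ e) :
    Nonempty (G ≃g completeBipartiteGraph (Fin 1) (Fin G.edgeFinset.card)) := by
  classical
  have hadj : ∀ u : V, u ≠ v → G.Adj v u := by
    intro u hu
    obtain ⟨w⟩ := hG.preconnected u v
    cases w with
    | nil => exact absurd rfl hu
    | cons h q =>
      rename_i x
      have hmem : v ∈ s(u, x) := hv _ h
      rw [Sym2.mem_iff] at hmem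
      rcases hmem with h' | h'
      · exact absurd h'.symm hu
      · subst h'; exact h.symm
  have hcenter : ∀ a b : V, G.Adj a b → a = v ∨ b = v := by
    intro a b hab
    have := hv _ (G.mem_edgeSet.mpr hab)
    rw [Sym2.mem_iff] at this
    rcases this with h | h
    exacts [Or.inl h.symm, Or.inr h.symm]
  have hcard : Fintype.card {x : V // ¬ x = v} = G.edgeFinset.card := by
    have himg : G.edgeFinset = (Finset.univ.erase v).image (fun u => s(v, u)) := by
      ext e
      simp only [mem_edgeFinset, Finset.mem_image, Finset.mem_erase, Finset.mem_univ, and_true]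
      constructor
      · intro he
        induction e using Sym2.ind with
        | _ a b =>
          rcases hcenter a b he with rfl | rfl
          · exact ⟨b, he.ne', Sym2.eq_swap ▸ rfl⟩
          · exact ⟨a, he.ne, Sym2.eq_swap⟩
      · rintro ⟨u, hu, rfl⟩
        exact hadj u hu
    rw [himg, Finset.card_image_of_injOn (fun a _ b _ h => Sym2.congr_right.mp h),
      Finset.card_erase_of_mem (Finset.mem_univ v), Finset.card_univ]
    rw [Fintype.card_subtype_compl, Fintype.card_subtype_eq]
  let E1 : {x : V // x = v} ≃ Fin 1 := Fintype.equivFinOfCardEq (Fintype.card_subtype_eq v)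
  let E2 : {x : V // ¬ x = v} ≃ Fin G.edgeFinset.card := Fintype.equivFinOfCardEq hcard
  let φ : V ≃ Fin 1 ⊕ Fin G.edgeFinset.card :=
    (Equiv.sumCompl (· = v)).symm.trans (E1.sumCongr E2)
  have hpos : ∀ (a : V) (h : a = v), φ a = Sum.inl (E1 ⟨a, h⟩) := by
    intro a h
    show (E1.sumCongr E2) ((Equiv.sumCompl (· = v)).symm a) = _
    rw [Equiv.sumCompl_symm_apply_of_pos (p := (· = v)) (a := a) h]
    rfl
  have hneg : ∀ (a : V) (h : ¬ a = v), φ a = Sum.inr (E2 ⟨a, h⟩) := by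
    intro a h
    show (E1.sumCongr E2) ((Equiv.sumCompl (· = v)).symm a) = _
    rw [Equiv.sumCompl_symm_apply_of_neg (p := (· = v)) (a := a) h]
    rfl
  refine ⟨⟨φ, ?_⟩⟩
  intro a b
  by_cases ha : a = v <;> by_cases hb : b = v
  · rw [hpos a ha, hpos b hb]
    subst ha; subst hb
    simp [SimpleGraph.irrefl]
  · rw [hpos a ha, hneg b hb]
    subst ha
    simp [hadj b hb]
  · rw [hneg a ha, hpos b hb]
    subst hb
    simp [(hadj a ha).symm]
  · rw [hneg a ha, hneg b hb]
    simp only [completeBipartiteGraph]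
    constructor
    · rintro (⟨h1, -⟩ | ⟨-, h2⟩)
      · simp at h1
      · simp at h2
    · intro hab
      rcases hcenter a b hab with rfl | rfl
      · exact absurd rfl ha
      · exact absurd rfl hb


lemma exists_adj {V : Type*} (G : SimpleGraph V) (hG : G.Connected) [Nontrivial V] :
    ∃ a b : V, G.Adj a b := by
  obtain ⟨a, b, hab⟩ := exists_pair_ne V
  obtain ⟨w⟩ := hG.preconnected a b
  cases w with
  | nil => exact absurd rfl hab
  | cons h q => exact ⟨_, _, h⟩

/-- For a connected graph `G` of size `m`, `pc(G) = m` iff `G` is the star `K_{1,m}`. -/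
theorem pc_eq_size_iff_star {V : Type*} [Fintype V] [DecidableEq V] (G : SimpleGraph V)
    [DecidableRel G.Adj] (hG : G.Connected) [Nontrivial V] :
    pc G = G.edgeFinset.card ↔
      Nonempty (G ≃g completeBipartiteGraph (Fin 1) (Fin G.edgeFinset.card)) := by
  constructor
  · intro hpc
    by_cases hdis : ∃ e1 ∈ G.edgeFinset, ∃ e2 ∈ G.edgeFinset, ∀ x, ¬(x ∈ e1 ∧ x ∈ e2)
    · exfalso
      obtain ⟨e1, h1, e2, h2, hd⟩ := hdis
      have hle := pc_le_of_disjoint_edges G hG h1 h2 hd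
      have hne : e1 ≠ e2 := by
        rintro rfl
        induction e1 using Sym2.ind with
        | _ x y => exact hd x ⟨by simp, by simp⟩
      have h2c : 2 ≤ G.edgeFinset.card := Finset.one_lt_card.mpr ⟨e1, h1, e2, h2, hne⟩
      omega
    · push_neg at hdis
      by_cases hstar : ∃ v : V, ∀ e ∈ G.edgeSet, v ∈ e
      · obtain ⟨v, hv⟩ := hstar
        exact star_iso G hG v hv
      · exfalso
        push_neg at hstar
        have hdis' : ∀ e1 ∈ G.edgeSet, ∀ e2 ∈ G.edgeSet, ∃ x, x ∈ e1 ∧ x ∈ e2 := by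
          intro e1 h1 e2 h2
          exact hdis e1 (mem_edgeFinset.mpr h1) e2 (mem_edgeFinset.mpr h2)
        obtain ⟨a, b, hab⟩ := exists_adj G hG
        obtain ⟨e2, he2, ha2⟩ := hstar a
        obtain ⟨x, hx2, hxab⟩ := hdis' e2 he2 s(a, b) (G.mem_edgeSet.mpr hab)
        rw [Sym2.mem_iff] at hxab
        have hb2 : b ∈ e2 := by
          rcases hxab with rfl | rfl
          · exact absurd hx2 ha2
          · exact hx2
        obtain ⟨c, rfl⟩ := Sym2.mem_iff_exists.mp hb2
        have hbc : G.Adj b c := G.mem_edgeSet.mp he2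
        have hca : c ≠ a := fun h => ha2 (by simp [h])
        obtain ⟨e3, he3, hb3⟩ := hstar b
        obtain ⟨y, hy3, hyab⟩ := hdis' e3 he3 s(a, b) (G.mem_edgeSet.mpr hab)
        rw [Sym2.mem_iff] at hyab
        have ha3 : a ∈ e3 := by
          rcases hyab with rfl | rfl
          · exact hy3
          · exact absurd hy3 hb3
        obtain ⟨d, rfl⟩ := Sym2.mem_iff_exists.mp ha3
        have had : G.Adj a d := G.mem_edgeSet.mp he3
        have hdb : d ≠ b := fun h => hb3 (by simp [h])
        obtain ⟨z, hz3, hz2⟩ := hdis' s(a, d) he3 s(b, c) he2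
        rw [Sym2.mem_iff] at hz3 hz2
        have hdc : d = c := by
          rcases hz3 with rfl | rfl
          · rcases hz2 with rfl | rfl
            · exact absurd hab (G.irrefl)
            · exact absurd rfl hca
          · rcases hz2 with rfl | rfl
            · exact absurd rfl hdb
            · rfl
        have hac : G.Adj a c := hdc ▸ had
        -- every vertex is one of a, b, c
        have hall : ∀ w : V, w = a ∨ w = b ∨ w = c := by
          intro w
          by_contra hw
          push_neg at hw
          obtain ⟨hwa, hwb, hwc⟩ := hw
          -- w has an incident edge
          have : ∃ y, G.Adj w y := by
            obtain ⟨p⟩ := hG.preconnected w a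
            cases p with
            | nil => exact absurd rfl hwa
            | cons h q => exact ⟨_, h⟩
          obtain ⟨y, hwy⟩ := this
          obtain ⟨x1, hx1, hx1'⟩ := hdis' s(w, y) (G.mem_edgeSet.mpr hwy) s(a, b)
            (G.mem_edgeSet.mpr hab)
          obtain ⟨x2, hx2a, hx2'⟩ := hdis' s(w, y) (G.mem_edgeSet.mpr hwy) s(b, c)
            (G.mem_edgeSet.mpr hbc)
          obtain ⟨x3, hx3, hx3'⟩ := hdis' s(w, y) (G.mem_edgeSet.mpr hwy) s(a, c)
            (G.mem_edgeSet.mpr hac)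
          rw [Sym2.mem_iff] at hx1 hx1' hx2a hx2' hx3 hx3'
          have hab' := hab.ne
          have hbc' := hbc.ne
          rcases hx1 with rfl | rfl
          · rcases hx1' with rfl | rfl
            · exact hwa rfl
            · exact hwb rfl
          · rcases hx2a with rfl | rfl
            · rcases hx2' with rfl | rfl
              · exact hwb rfl
              · exact hwc rfl
            · rcases hx3 with rfl | rfl
              · rcases hx3' with rfl | rfl
                · exact hwa rfl
                · exact hwc rfl
              · rcases hx1' with h1 | h1 <;> rcases hx2' with h2 | h2
                · exact hab' (h1.symm.trans h2)
                · exact hca (h2.symm.trans h1)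
                · rcases hx3' with h3 | h3
                  · exact hab' (h3.symm.trans h1)
                  · exact hbc' (h1.symm.trans h3)
                · exact hbc' (h1.symm.trans h2)
        have hcomp : ∀ u w : V, u ≠ w → G.Adj u w := by
          intro u w huw
          rcases hall u with rfl | rfl | rfl <;> rcases hall w with rfl | rfl | rfl <;>
            first
              | exact absurd rfl huw
              | exact hab | exact hab.symm | exact hbc | exact hbc.symm
              | exact hac | exact hac.symm
        have hle1 := pc_le_one_of_complete G hcomp
        have h2c : 2 ≤ G.edgeFinset.card := by
          refine Finset.one_lt_card.mpr ⟨s(a, b), ?_, s(b, c), ?_, ?_⟩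
          · exact mem_edgeFinset.mpr (G.mem_edgeSet.mpr hab)
          · exact mem_edgeFinset.mpr (G.mem_edgeSet.mpr hbc)
          · intro h
            rw [Sym2.eq_iff] at h
            rcases h with ⟨rfl, rfl⟩ | ⟨rfl, h⟩
            · exact hab.ne rfl
            · exact hca rfl
        omega
  · rintro ⟨e⟩
    have h1 : 1 ≤ G.edgeFinset.card := by
      obtain ⟨a, b, hab⟩ := exists_adj G hG
      exact Finset.card_pos.mpr ⟨s(a, b), mem_edgeFinset.mpr (G.mem_edgeSet.mpr hab)⟩
    rw [pc_iso e]
    exact star_pc h1
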